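/- arXiv:1307.0227 — 2 statements merged into one kernel-verified Lean document; each statement's English description precedes it below -/
import Mathlib

section
/- Let K be a compact topological space and let g_m : K → ℝ (m ≥ 1) be continuous functions with g_m ≥ 0 satisfying the pointwise subadditivity g_{m+n}(x) ≤ g_m(x) + g_n(x) for all m, n ≥ 1 and all x ∈ K. Let h(x) := inf_{m ≥ 1} g_m(x)/m, so that g_m(x)/m → h(x) pointwise by Fekete's lemma. Then the sequence (g_m/m) converges uniformly to h on K if and only if h is continuous on K. -/
/-- On a compact space `K`, given continuous nonnegative functions `g m` (for `m ≥ 1`)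
which are pointwise subadditive in `m`, the sequence `g m / m` converges uniformly to its
pointwise limit `h x = ⨅ m ≥ 1, g m x / m` if and only if `h` is continuous. -/
theorem uniform_convergence_iff_continuous_of_subadditive
    {K : Type*} [TopologicalSpace K] [CompactSpace K]
    (g : ℕ → K → ℝ)
    (hcont : ∀ m, 1 ≤ m → Continuous (g m))
    (hnonneg : ∀ m, 1 ≤ m → ∀ x, 0 ≤ g m x)
    (hsub : ∀ m n, 1 ≤ m → 1 ≤ n → ∀ x, g (m + n) x ≤ g m x + g n x)
    (h : K → ℝ)
    (hh : ∀ x, h x = ⨅ m : ℕ, g (m + 1) x / ((m : ℝ) + 1)) :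
    TendstoUniformly (fun m (x : K) => g m x / (m : ℝ)) h Filter.atTop ↔ Continuous h := by
  -- basic facts
  have hbdd : ∀ x : K, BddBelow (Set.range fun m : ℕ => g (m + 1) x / ((m : ℝ) + 1)) := by
    intro x
    refine ⟨0, ?_⟩
    rintro y ⟨m, rfl⟩
    exact div_nonneg (hnonneg (m + 1) (Nat.le_add_left 1 m) x) (by positivity)
  have hle : ∀ (n : ℕ), 1 ≤ n → ∀ x, h x ≤ g n x / n := by
    intro n hn x
    rw [hh x]
    have := ciInf_le (hbdd x) (n - 1)
    have hn1 : n - 1 + 1 = n := Nat.succ_pred_eq_of_pos hn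
    have hn1' : ((n - 1 : ℕ) : ℝ) + 1 = (n : ℝ) := by
      exact_mod_cast hn1
    rwa [hn1, hn1'] at this
  constructor
  · -- uniform convergence implies continuity of the limit
    intro htu
    refine htu.continuous (Filter.Eventually.frequently ?_)
    filter_upwards [Filter.eventually_ge_atTop 1] with m hm
    exact (hcont m hm).div_const _
  · -- continuity of the limit implies uniform convergence (Dini-type argument)
    intro hc
    rcases isEmpty_or_nonempty K with hK | hK
    · rw [Metric.tendstoUniformly_iff]
      intro ε hε
      filter_upwards with n x
      exact (IsEmpty.false x).elim
    -- submultiplicativity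
    have hmul : ∀ m, 1 ≤ m → ∀ q, 1 ≤ q → ∀ x, g (m * q) x ≤ q * g m x := by
      intro m hm q hq x
      induction q, hq using Nat.le_induction with
      | base => simp
      | succ q hq ih =>
        have h1 : g (m * (q + 1)) x ≤ g (m * q) x + g m x := by
          have := hsub (m * q) m (Nat.one_le_iff_ne_zero.2 (by positivity)) hm x
          simpa [Nat.mul_succ] using this
        have : g (m * (q + 1)) x ≤ q * g m x + g m x := le_trans h1 (by linarith)
        calc g (m * (q + 1)) x ≤ q * g m x + g m x := this
        _ = (↑(q + 1)) * g m x := by push_cast; ring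
    rw [Metric.tendstoUniformly_iff]
    intro ε hε
    set ε' := ε / 3 with hε'def
    have hε' : 0 < ε' := by positivity
    -- choose good indices pointwise
    have key : ∀ x : K, ∃ m : ℕ, 1 ≤ m ∧ g m x / m < h x + ε' := by
      intro x
      have : h x < h x + ε' := by linarith
      rw [hh x] at this
      obtain ⟨m, hm⟩ := exists_lt_of_ciInf_lt this
      rw [← hh x] at hm
      exact ⟨m + 1, Nat.le_add_left 1 m, by push_cast at hm ⊢; exact hm⟩
    choose m hm1 hm2 using key
    -- open cover
    set U : K → Set K := fun x => {y | g (m x) y / (m x) < h y + 2 * ε'} with hU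
    have hUopen : ∀ x, IsOpen (U x) :=
      fun x => isOpen_lt ((hcont (m x) (hm1 x)).div_const _) (hc.add continuous_const)
    have hUcover : (Set.univ : Set K) ⊆ ⋃ x ∈ (Set.univ : Set K), U x := by
      intro y _
      refine Set.mem_biUnion (Set.mem_univ y) ?_
      have := hm2 y
      simp only [U, Set.mem_setOf_eq]
      linarith
    obtain ⟨t, ht⟩ := isCompact_univ.elim_finite_subcover U hUopen (by simpa using hUcover)
    have htne : t.Nonempty := by
      obtain ⟨y⟩ := hK
      have := ht (Set.mem_univ y)
      rw [Set.mem_iUnion₂] at this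
      obtain ⟨x, hx, _⟩ := this
      exact ⟨x, hx⟩
    set M : ℕ := t.sup m with hM
    have hM1 : 1 ≤ M := by
      obtain ⟨x, hx⟩ := htne
      exact le_trans (hm1 x) (Finset.le_sup hx)
    -- uniform bound on g r for r ≤ M
    have hbound : ∀ r : ℕ, ∃ C : ℝ, 0 ≤ C ∧ ∀ y, 1 ≤ r → g r y ≤ C := by
      intro r
      rcases Nat.lt_or_ge r 1 with hr | hr
      · exact ⟨0, le_refl 0, fun y hy => absurd hy (by omega)⟩
      · obtain ⟨z, _, hz⟩ := isCompact_univ.exists_isMaxOn Set.univ_nonempty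
          ((hcont r hr).continuousOn)
        exact ⟨g r z, hnonneg r hr z, fun y _ => hz (Set.mem_univ y)⟩
    choose C hC0 hC using hbound
    set B : ℝ := (Finset.range (M + 1)).sup' (Finset.nonempty_range_add_one) C with hBdef
    have hB : ∀ r, r ≤ M → C r ≤ B := fun r hr =>
      Finset.le_sup' C (Finset.mem_range_succ_iff.2 hr)
    have hB0 : 0 ≤ B := le_trans (hC0 0) (hB 0 (Nat.zero_le M))
    -- choose N
    have htend : Filter.Tendsto (fun n : ℕ => B / n) Filter.atTop (nhds 0) :=
      tendsto_const_div_atTop_nhds_zero_nat B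
    have hev : ∀ᶠ n : ℕ in Filter.atTop, B / n < ε' :=
      htend.eventually (gt_mem_nhds hε')
    filter_upwards [hev, Filter.eventually_ge_atTop M, Filter.eventually_ge_atTop 1]
      with n hn1 hn2 hn3 x
    -- find a covering set containing x
    have hx := ht (Set.mem_univ x)
    rw [Set.mem_iUnion₂] at hx
    obtain ⟨x₀, hx₀t, hxU⟩ := hx
    set m₀ := m x₀ with hm₀def
    have hm₀1 : 1 ≤ m₀ := hm1 x₀
    have hm₀M : m₀ ≤ M := Finset.le_sup hx₀t
    have hxU' : g m₀ x / m₀ < h x + 2 * ε' := hxU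
    set q := n / m₀ with hqdef
    set r := n % m₀ with hrdef
    have hdm : m₀ * q + r = n := Nat.div_add_mod n m₀
    have hq1 : 1 ≤ q := Nat.one_le_div_iff (by omega) |>.2 (by omega)
    have hrM : r < m₀ := Nat.mod_lt n (by omega)
    -- main bound: g n x ≤ q * g m₀ x + B
    have hmain : g n x ≤ q * g m₀ x + B := by
      rcases Nat.eq_zero_or_pos r with hr0 | hr1
      · have : g n x ≤ q * g m₀ x := by
          have := hmul m₀ hm₀1 q hq1 x
          rw [hr0, Nat.add_zero] at hdm
          rwa [hdm] at this
        linarith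
      · have h1 : g n x ≤ g (m₀ * q) x + g r x := by
          have := hsub (m₀ * q) r (Nat.one_le_iff_ne_zero.2 (by positivity)) hr1 x
          rwa [hdm] at this
        have h2 : g (m₀ * q) x ≤ q * g m₀ x := hmul m₀ hm₀1 q hq1 x
        have h3 : g r x ≤ B := le_trans (hC r x hr1) (hB r (by omega))
        linarith
    -- arithmetic wrap-up
    have hnpos : (0 : ℝ) < n := by exact_mod_cast hn3
    have hm₀pos : (0 : ℝ) < m₀ := by exact_mod_cast hm₀1
    have hqm : (q : ℝ) * m₀ ≤ n := by
      have := Nat.div_mul_le_self n m₀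
      exact_mod_cast this
    have hgnn : 0 ≤ g m₀ x := hnonneg m₀ hm₀1 x
    have hupper : g n x / n < h x + ε := by
      rw [div_lt_iff₀ hnpos]
      have e1 : (q : ℝ) * g m₀ x ≤ (n : ℝ) * (g m₀ x / m₀) := by
        rw [mul_div_assoc' (n : ℝ)]
        rw [le_div_iff₀ hm₀pos]
        have : (q : ℝ) * m₀ * g m₀ x ≤ (n : ℝ) * g m₀ x :=
          mul_le_mul_of_nonneg_right hqm hgnn
        linarith [this]
      have e2 : (n : ℝ) * (g m₀ x / m₀) < (n : ℝ) * (h x + 2 * ε') :=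
        (mul_lt_mul_iff_right₀ hnpos).2 hxU'
      have e3 : B < ε' * n := by
        rw [div_lt_iff₀ hnpos] at hn1
        linarith
      have : g n x < (n : ℝ) * (h x + 2 * ε') + ε' * n := by linarith
      have hεeq : ε = 3 * ε' := by rw [hε'def]; ring
      calc g n x < (n : ℝ) * (h x + 2 * ε') + ε' * n := this
      _ = (h x + 3 * ε') * n := by ring
      _ = (h x + ε) * n := by rw [hεeq]
    have hlower : h x ≤ g n x / n := hle n hn3 x
    rw [Real.dist_eq, abs_sub_lt_iff]
    constructor <;> linarith
end

section
/- Let E be a finite-dimensional real normed vector space, let s ⊆ E be a finite set, and let P = convexHull(s) be the polytope it spans. If f : E → ℝ is concave on P, then f is automatically lower semicontinuous on P. Consequently, a function that is concave on P and upper semicontinuous on P is continuous on P. -/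
open Finset

/-- Conic Carathéodory with mass control: a nonnegative combination of the vectors `u v`,
`v ∈ t`, can be rewritten as a nonnegative combination over a subset on which the `u v` are
linearly independent, without increasing the total mass. -/
lemma conic_caratheodory {E : Type*} [AddCommGroup E] [Module ℝ E] (u : E → E) :
    ∀ (t : Finset E) (w : E → ℝ), (∀ v ∈ t, 0 ≤ w v) →
    ∃ (t' : Finset E) (w' : E → ℝ), t' ⊆ t ∧ (∀ v ∈ t', 0 ≤ w' v) ∧
      (LinearIndependent ℝ fun v : t' => u v) ∧
      (∑ v ∈ t', w' v • u v) = (∑ v ∈ t, w v • u v) ∧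
      (∑ v ∈ t', w' v) ≤ ∑ v ∈ t, w v := by
  classical
  intro t
  induction t using Finset.strongInduction with
  | _ t ih =>
  intro w hw
  by_cases hind : LinearIndependent ℝ fun v : t => u v
  · exact ⟨t, w, subset_rfl, hw, hind, rfl, le_rfl⟩
  · -- get a nontrivial relation, with nonnegative sum and some positive coefficient
    obtain ⟨g₀, hg₀rel, i₀, hi₀⟩ := Fintype.not_linearIndependent_iff.1 hind
    set g₁ : E → ℝ := fun v => if h : v ∈ t then g₀ ⟨v, h⟩ else 0 with hg₁
    have hrel₁ : ∑ v ∈ t, g₁ v • u v = 0 := by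
      rw [← Finset.sum_attach t (fun v => g₁ v • u v)]
      simpa [hg₁] using hg₀rel
    have hsum₁ : ∑ v ∈ t, g₁ v = ∑ i : t, g₀ i := by
      rw [← Finset.sum_attach t g₁]; simp [hg₁]
    have hne : ∃ v ∈ t, g₁ v ≠ 0 := ⟨i₀, i₀.2, by simp [hg₁, i₀.2, hi₀]⟩
    -- choose the sign
    have hnegrel : ∑ v ∈ t, (fun v => -g₁ v) v • u v = 0 := by
      have : ∑ v ∈ t, (-g₁ v) • u v = -∑ v ∈ t, g₁ v • u v := by
        rw [← Finset.sum_neg_distrib]; congr 1; ext v; rw [neg_smul]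
      simpa [this] using congrArg Neg.neg hrel₁
    have hnegsum : ∑ v ∈ t, (fun v => -g₁ v) v = -∑ v ∈ t, g₁ v := by
      simp [Finset.sum_neg_distrib]
    have hsign : ∃ g : E → ℝ, (∑ v ∈ t, g v • u v = 0) ∧ 0 ≤ ∑ v ∈ t, g v ∧
        ∃ v ∈ t, 0 < g v := by
      rcases lt_trichotomy (∑ v ∈ t, g₁ v) 0 with h | h | h
      · refine ⟨fun v => -g₁ v, hnegrel, by rw [hnegsum]; linarith, ?_⟩
        by_contra hcon
        push_neg at hcon
        have : 0 ≤ ∑ v ∈ t, g₁ v := Finset.sum_nonneg fun v hv => by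
          have := hcon v hv
          simp only [neg_nonpos] at this
          linarith [this]
        linarith
      · obtain ⟨v₀, hv₀t, hv₀⟩ := hne
        rcases lt_or_gt_of_ne hv₀ with hneg | hpos
        · exact ⟨fun v => -g₁ v, hnegrel, by rw [hnegsum, h, neg_zero], v₀, hv₀t,
            by simpa using neg_pos.2 hneg⟩
        · exact ⟨g₁, hrel₁, h.ge, v₀, hv₀t, hpos⟩
      · obtain ⟨v₀, hv₀t, hv₀⟩ : ∃ v ∈ t, 0 < g₁ v := by
          by_contra hcon
          push_neg at hcon
          have : ∑ v ∈ t, g₁ v ≤ 0 := Finset.sum_nonpos hcon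
          linarith
        exact ⟨g₁, hrel₁, h.le, v₀, hv₀t, hv₀⟩
    obtain ⟨g, hrel, hgsum, v₀, hv₀t, hv₀⟩ := hsign
    set T : Finset E := t.filter (fun v => 0 < g v) with hT
    have hTne : T.Nonempty := ⟨v₀, Finset.mem_filter.2 ⟨hv₀t, hv₀⟩⟩
    obtain ⟨v₁, hv₁T, hv₁min⟩ := T.exists_mem_eq_inf' hTne (fun v => w v / g v)
    have hv₁t : v₁ ∈ t := (Finset.mem_filter.1 hv₁T).1
    have hgv₁ : 0 < g v₁ := (Finset.mem_filter.1 hv₁T).2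
    set θ : ℝ := T.inf' hTne (fun v => w v / g v) with hθ
    have hθ0 : 0 ≤ θ := by
      rw [hθ, Finset.le_inf'_iff]
      intro v hv
      exact div_nonneg (hw v (Finset.mem_filter.1 hv).1) (le_of_lt (Finset.mem_filter.1 hv).2)
    set w'' : E → ℝ := fun v => w v - θ * g v with hw''
    have hw''nn : ∀ v ∈ t, 0 ≤ w'' v := by
      intro v hv
      rcases le_or_gt (g v) 0 with hg | hg
      · have : θ * g v ≤ 0 := mul_nonpos_of_nonneg_of_nonpos hθ0 hg
        have := hw v hv
        simp only [hw'']; linarith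
      · have hvT : v ∈ T := Finset.mem_filter.2 ⟨hv, hg⟩
        have : θ ≤ w v / g v := Finset.inf'_le _ hvT
        have := (le_div_iff₀ hg).1 this
        simp only [hw'']; linarith
    have hw''v₁ : w'' v₁ = 0 := by
      have : θ = w v₁ / g v₁ := hv₁min
      simp only [hw'', this]
      field_simp
      ring
    obtain ⟨t', wr, ht'sub, hwrnn, hindep, hsumeq, hsumle⟩ :=
      ih (t.erase v₁) (Finset.erase_ssubset hv₁t) w'' (fun v hv => hw''nn v (Finset.mem_of_mem_erase hv))
    have herase_vec : ∑ v ∈ t.erase v₁, w'' v • u v = ∑ v ∈ t, w'' v • u v := by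
      apply Finset.sum_erase
      rw [hw''v₁, zero_smul]
    have herase_mass : ∑ v ∈ t.erase v₁, w'' v = ∑ v ∈ t, w'' v := by
      apply Finset.sum_erase
      exact hw''v₁
    have hvec : ∑ v ∈ t, w'' v • u v = ∑ v ∈ t, w v • u v := by
      have : ∑ v ∈ t, w'' v • u v = (∑ v ∈ t, w v • u v) - θ • ∑ v ∈ t, g v • u v := by
        rw [Finset.smul_sum, ← Finset.sum_sub_distrib]
        congr 1
        ext v
        simp only [hw'', sub_smul, smul_smul]
      rw [this, hrel, smul_zero, sub_zero]
    have hmass : ∑ v ∈ t, w'' v ≤ ∑ v ∈ t, w v := by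
      have : ∑ v ∈ t, w'' v = (∑ v ∈ t, w v) - θ * ∑ v ∈ t, g v := by
        simp only [hw'', Finset.sum_sub_distrib, Finset.mul_sum]
      rw [this]
      have : 0 ≤ θ * ∑ v ∈ t, g v := mul_nonneg hθ0 hgsum
      linarith
    refine ⟨t', wr, ht'sub.trans (Finset.erase_subset _ _), hwrnn, hindep, ?_, ?_⟩
    · rw [hsumeq, herase_vec, hvec]
    · calc ∑ v ∈ t', wr v ≤ ∑ v ∈ t.erase v₁, w'' v := hsumle
        _ = ∑ v ∈ t, w'' v := herase_mass
        _ ≤ ∑ v ∈ t, w v := hmass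

/-- For a linearly independent family indexed by a finset, the sum of absolute values of
coefficients is controlled by the norm of the combination. -/
lemma indep_coeff_bound {E : Type*} [NormedAddCommGroup E] [NormedSpace ℝ E]
    [FiniteDimensional ℝ E] (u : E → E) (t : Finset E)
    (h : LinearIndependent ℝ fun v : t => u v) :
    ∃ C : ℝ, 0 ≤ C ∧ ∀ w : E → ℝ, ∑ v ∈ t, |w v| ≤ C * ‖∑ v ∈ t, w v • u v‖ := by
  classical
  set L : (t → ℝ) →ₗ[ℝ] E := Fintype.linearCombination ℝ (fun v : t => u v) with hL
  have hLapply : ∀ c : t → ℝ, L c = ∑ i : t, c i • u i := fun c => by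
    simp [hL, Fintype.linearCombination_apply]
  have hinj : Function.Injective L := by
    intro a b hab
    have : ∀ i, (a - b) i = 0 := by
      apply Fintype.linearIndependent_iff.1 h
      have : L (a - b) = 0 := by rw [map_sub, hab, sub_self]
      rw [hLapply] at this
      simpa using this
    funext i
    have := this i
    simp only [Pi.sub_apply] at this
    linarith
  set e : (t → ℝ) ≃ₗ[ℝ] LinearMap.range L := LinearEquiv.ofInjective L hinj with he
  have : FiniteDimensional ℝ (LinearMap.range L) := inferInstance
  set φ : LinearMap.range L →L[ℝ] (t → ℝ) := LinearMap.toContinuousLinearMap e.symm.toLinearMap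
  refine ⟨t.card * max ‖φ‖ 0, by positivity, ?_⟩
  intro w
  set w' : t → ℝ := fun i => w i with hw'
  have hLw : (L w' : E) = ∑ v ∈ t, w v • u v := by
    rw [hLapply, ← Finset.sum_attach t (fun v => w v • u v)]
    rfl
  have hmem : L w' ∈ LinearMap.range L := LinearMap.mem_range_self L w'
  have hrec : φ ⟨L w', hmem⟩ = w' := by
    have : e w' = ⟨L w', hmem⟩ := rfl
    simp only [φ, LinearMap.coe_toContinuousLinearMap', LinearEquiv.coe_coe]
    rw [← this, LinearEquiv.symm_apply_apply]
  have hnorm : ‖w'‖ ≤ ‖φ‖ * ‖∑ v ∈ t, w v • u v‖ := by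
    have := φ.le_opNorm ⟨L w', hmem⟩
    rw [hrec] at this
    have hcoe : ‖(⟨L w', hmem⟩ : LinearMap.range L)‖ = ‖∑ v ∈ t, w v • u v‖ := by
      rw [← hLw]; rfl
    rw [hcoe] at this
    exact this
  have habs : ∀ i : t, |w i| ≤ ‖w'‖ := by
    intro i
    have := norm_le_pi_norm w' i
    simpa [hw'] using this
  calc ∑ v ∈ t, |w v| = ∑ i : t, |w i| := (Finset.sum_attach t (fun v => |w v|)).symm
    _ ≤ ∑ _i : t, ‖w'‖ := Finset.sum_le_sum fun i _ => habs i
    _ = t.card * ‖w'‖ := by simp [mul_comm]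
    _ ≤ t.card * (‖φ‖ * ‖∑ v ∈ t, w v • u v‖) := by
        apply mul_le_mul_of_nonneg_left hnorm (by positivity)
    _ ≤ t.card * max ‖φ‖ 0 * ‖∑ v ∈ t, w v • u v‖ := by
        rw [mul_assoc]
        apply mul_le_mul_of_nonneg_left _ (by positivity)
        apply mul_le_mul_of_nonneg_right (le_max_left _ _) (norm_nonneg _)

/-- A uniform coefficient bound over all linearly independent subfamilies of a fixed finset. -/
lemma uniform_coeff_bound {E : Type*} [NormedAddCommGroup E] [NormedSpace ℝ E]
    [FiniteDimensional ℝ E] (S : Finset E) (x : E) :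
    ∃ C : ℝ, 0 ≤ C ∧ ∀ t ⊆ S, (LinearIndependent ℝ fun v : t => (v : E) - x) →
      ∀ w : E → ℝ, ∑ v ∈ t, |w v| ≤ C * ‖∑ v ∈ t, w v • ((v : E) - x)‖ := by
  classical
  have H : ∀ t : Finset E, ∃ C : ℝ, 0 ≤ C ∧
      ((LinearIndependent ℝ fun v : t => (v : E) - x) →
        ∀ w : E → ℝ, ∑ v ∈ t, |w v| ≤ C * ‖∑ v ∈ t, w v • ((v : E) - x)‖) := by
    intro t
    by_cases h : LinearIndependent ℝ fun v : t => (v : E) - x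
    · obtain ⟨C, hC0, hC⟩ := indep_coeff_bound (fun v => v - x) t h
      exact ⟨C, hC0, fun _ => hC⟩
    · exact ⟨0, le_rfl, fun h' => absurd h' h⟩
  choose F hF0 hF using H
  refine ⟨∑ t ∈ S.powerset, F t, Finset.sum_nonneg fun t _ => hF0 t, ?_⟩
  intro t htS hind w
  have hFle : F t ≤ ∑ t' ∈ S.powerset, F t' :=
    Finset.single_le_sum (fun t' _ => hF0 t') (Finset.mem_powerset.2 htS)
  calc ∑ v ∈ t, |w v| ≤ F t * ‖∑ v ∈ t, w v • ((v : E) - x)‖ := hF t hind w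
    _ ≤ (∑ t' ∈ S.powerset, F t') * ‖∑ v ∈ t, w v • ((v : E) - x)‖ :=
        mul_le_mul_of_nonneg_right hFle (norm_nonneg _)

/-- Key estimate: a concave function on the convex hull of a finset satisfies a one-sided
Lipschitz-type lower bound near each point of the hull. -/
lemma concaveOn_polytope_key {E : Type*} [NormedAddCommGroup E] [NormedSpace ℝ E]
    [FiniteDimensional ℝ E] (S : Finset E) (f : E → ℝ)
    (hf : ConcaveOn ℝ (convexHull ℝ (S : Set E)) f) (x : E)
    (hx : x ∈ convexHull ℝ (S : Set E)) :
    ∃ K : ℝ, 0 ≤ K ∧ ∀ y ∈ convexHull ℝ (S : Set E), f x - K * ‖y - x‖ ≤ f y := by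
  classical
  have hSne : S.Nonempty := by
    rcases S.eq_empty_or_nonempty with rfl | h
    · simp at hx
    · exact h
  set m : ℝ := S.inf' hSne f with hm
  have hmle : ∀ p ∈ convexHull ℝ (S : Set E), m ≤ f p := by
    intro p hp
    obtain ⟨z, hz, hzp⟩ := hf.exists_le_of_mem_convexHull (subset_convexHull ℝ (S : Set E)) hp
    exact le_trans (Finset.inf'_le f hz) hzp
  have hB : 0 ≤ f x - m := by linarith [hmle x hx]
  obtain ⟨C, hC0, hC⟩ := uniform_coeff_bound S x
  refine ⟨C * (f x - m), mul_nonneg hC0 hB, ?_⟩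
  intro y hy
  obtain ⟨w, hw0, hw1, hwy⟩ := Finset.mem_convexHull'.1 hy
  have hdx : ∑ v ∈ S, w v • (v - x) = y - x := by
    have : ∑ v ∈ S, w v • (v - x) = (∑ v ∈ S, w v • v) - (∑ v ∈ S, w v) • x := by
      rw [Finset.sum_smul, ← Finset.sum_sub_distrib]
      congr 1; ext v; rw [smul_sub]
    rw [this, hwy, hw1, one_smul]
  obtain ⟨t', w', ht'S, hw'0, hind, hsumeq, hsumle⟩ := conic_caratheodory (fun v => v - x) S w hw0
  rw [hdx] at hsumeq
  rw [hw1] at hsumle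
  set T : ℝ := ∑ v ∈ t', w' v with hT
  have hT0 : 0 ≤ T := Finset.sum_nonneg hw'0
  have hTle : T ≤ C * ‖y - x‖ := by
    calc T ≤ ∑ v ∈ t', |w' v| := Finset.sum_le_sum fun v _ => le_abs_self _
      _ ≤ C * ‖∑ v ∈ t', w' v • ((v : E) - x)‖ := hC t' ht'S hind w'
      _ = C * ‖y - x‖ := by rw [hsumeq]
  rcases eq_or_lt_of_le hT0 with hT0' | hTpos
  · -- T = 0 : then y = x
    have hallz : ∀ v ∈ t', w' v = 0 :=
      (Finset.sum_eq_zero_iff_of_nonneg hw'0).1 hT0'.symm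
    have hyx : y = x := by
      have : y - x = 0 := by
        rw [← hsumeq]
        exact Finset.sum_eq_zero fun v hv => by rw [hallz v hv, zero_smul]
      have := sub_eq_zero.1 this
      exact this
    rw [hyx]
    simp
  · -- 0 < T
    set p : E := t'.centerMass w' id with hp
    have hpmem : p ∈ convexHull ℝ (S : Set E) := by
      have : p ∈ convexHull ℝ (t' : Set E) :=
        t'.centerMass_id_mem_convexHull hw'0 (by rw [← hT]; exact hTpos)
      exact convexHull_mono ht'S this
    have hTp : T • p = ∑ v ∈ t', w' v • v := by
      rw [hp, Finset.centerMass, ← hT, smul_inv_smul₀ (ne_of_gt hTpos)]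
      simp
    have hyrep : y = (1 - T) • x + T • p := by
      have h1 : ∑ v ∈ t', w' v • ((v : E) - x) = (∑ v ∈ t', w' v • v) - T • x := by
        rw [hT, Finset.sum_smul, ← Finset.sum_sub_distrib]
        congr 1; ext v; rw [smul_sub]
      have h2 : y - x = T • p - T • x := by rw [← hsumeq, h1, hTp]
      calc y = x + (y - x) := by abel
        _ = x + (T • p - T • x) := by rw [h2]
        _ = (1 - T) • x + T • p := by rw [sub_smul, one_smul]; abel
    have hconc : (1 - T) * f x + T * f p ≤ f ((1 - T) • x + T • p) :=
      hf.2 hx hpmem (by linarith) hT0 (by ring)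
    have hfp : m ≤ f p := hmle p hpmem
    have : f x - T * (f x - m) ≤ f y := by
      rw [hyrep]
      nlinarith [hconc]
    have hTB : T * (f x - m) ≤ C * (f x - m) * ‖y - x‖ := by
      calc T * (f x - m) ≤ (C * ‖y - x‖) * (f x - m) := mul_le_mul_of_nonneg_right hTle hB
        _ = C * (f x - m) * ‖y - x‖ := by ring
    linarith

/-- A concave function on a polytope (the convex hull of a finite set in a
finite-dimensional real normed vector space) is automatically lower semicontinuous there;
consequently, if it is moreover upper semicontinuous on the polytope, it is continuous
on the polytope. -/
theorem concaveOn_polytope_lowerSemicontinuousOn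
    {E : Type*} [NormedAddCommGroup E] [NormedSpace ℝ E] [FiniteDimensional ℝ E]
    (s : Set E) (hs : s.Finite) (f : E → ℝ)
    (hf : ConcaveOn ℝ (convexHull ℝ s) f) :
    LowerSemicontinuousOn f (convexHull ℝ s) ∧
    (UpperSemicontinuousOn f (convexHull ℝ s) → ContinuousOn f (convexHull ℝ s)) := by
  have hScoe : (hs.toFinset : Set E) = s := hs.coe_toFinset
  have hlsc : LowerSemicontinuousOn f (convexHull ℝ s) := by
    intro x hx c hc
    have hx' : x ∈ convexHull ℝ (hs.toFinset : Set E) := by rw [hScoe]; exact hx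
    have hf' : ConcaveOn ℝ (convexHull ℝ (hs.toFinset : Set E)) f := by rw [hScoe]; exact hf
    obtain ⟨K, hK0, hK⟩ := concaveOn_polytope_key hs.toFinset f hf' x hx'
    set δ : ℝ := (f x - c) / (K + 1) with hδ
    have hδ0 : 0 < δ := div_pos (by linarith) (by linarith)
    have hball : Metric.ball x δ ∈ nhdsWithin x (convexHull ℝ s) :=
      nhdsWithin_le_nhds (Metric.ball_mem_nhds x hδ0)
    filter_upwards [hball, self_mem_nhdsWithin] with y hyball hymem
    have hyx : ‖y - x‖ < δ := by
      rw [Metric.mem_ball, dist_eq_norm] at hyball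
      exact hyball
    have hy' : y ∈ convexHull ℝ (hs.toFinset : Set E) := by rw [hScoe]; exact hymem
    have h1 : f x - K * ‖y - x‖ ≤ f y := hK y hy'
    have h2 : K * ‖y - x‖ < f x - c := by
      calc K * ‖y - x‖ ≤ K * δ := mul_le_mul_of_nonneg_left hyx.le hK0
        _ < (K + 1) * δ := by nlinarith
        _ = f x - c := by rw [hδ]; field_simp
    linarith
  exact ⟨hlsc, fun husc => continuousOn_iff_lower_upperSemicontinuousOn.2 ⟨hlsc, husc⟩⟩
end
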